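/- For a.e. ω ∈ Ω, sup_{n≥0} ‖G_n‖_BV < ∞, where G_n = (1/h_{σ^n ω}) Σ_{j=0}^{n-1} 𝓛_{σ^j ω}^{(n-j)}(ψ̃_{σ^j ω} h_{σ^j ω}). -/

import Mathlib

open MeasureTheory Filter ENNReal

noncomputable section

namespace RandomASIP

variable {Ω X : Type*} [MeasurableSpace Ω] [MeasurableSpace X]

/-- The iterated maps `f_ω^n = f_{σ^{n-1}ω} ∘ ⋯ ∘ f_ω`. -/
def fIter (σ : Ω → Ω) (f : Ω → X → X) (ω : Ω) : ℕ → X → X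
  | 0 => id
  | n + 1 => f (σ^[n] ω) ∘ fIter σ f ω n

/-- The iterated transfer operators `𝓛_ω^{(n)} = 𝓛_{σ^{n-1}ω} ∘ ⋯ ∘ 𝓛_ω`. -/
def Lit (σ : Ω → Ω) (L : Ω → (X → ℝ) → X → ℝ) (ω : Ω) : ℕ → (X → ℝ) → X → ℝ
  | 0 => fun φ => φ
  | n + 1 => fun φ => L (σ^[n] ω) (Lit σ L ω n φ)

/-- The BV norm `‖φ‖_BV = var(φ) + ‖φ‖₁`. -/
def bvNorm (m : Measure X) (var : (X → ℝ) → ℝ≥0∞) (φ : X → ℝ) : ℝ≥0∞ :=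
  var φ + eLpNorm φ 1 m

/-- The norm `‖φ‖_var = var(φ) + ‖φ‖_∞`. -/
def varNorm (m : Measure X) (var : (X → ℝ) → ℝ≥0∞) (φ : X → ℝ) : ℝ≥0∞ :=
  var φ + eLpNorm φ ∞ m

/-- Membership in `BV = {φ ∈ L¹(m) : var(φ) < ∞}`. -/
def MemBV (m : Measure X) (var : (X → ℝ) → ℝ≥0∞) (φ : X → ℝ) : Prop :=
  Integrable φ m ∧ var φ < ∞

/-- The cone `C_a = {φ ∈ BV : φ ≥ 0 and var(φ) ≤ a ∫ φ dm}`. -/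
def coneC (m : Measure X) (var : (X → ℝ) → ℝ≥0∞) (a : ℝ) : Set (X → ℝ) :=
  {φ | MemBV m var φ ∧ 0 ≤ᵐ[m] φ ∧ var φ ≤ ENNReal.ofReal (a * ∫ x, φ x ∂m)}

/-- Conditions (V1)–(V8) on the abstract variation functional. -/
structure VariationGood (m : Measure X) (var : (X → ℝ) → ℝ≥0∞) : Prop where
  /-- (V1) -/
  v1 : ∀ (t : ℝ) (h : X → ℝ), var (fun x => t * h x) = ENNReal.ofReal |t| * var h
  /-- (V2) -/
  v2 : ∀ g h : X → ℝ, var (g + h) ≤ var g + var h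
  /-- (V3) -/
  v3 : ∃ Cvar : ℝ, 1 ≤ Cvar ∧ ∀ h : X → ℝ,
        eLpNorm h ∞ m ≤ ENNReal.ofReal Cvar * (eLpNorm h 1 m + var h)
  /-- (V4): `L¹(m)`-compactness of BV-balls, in sequential form -/
  v4 : ∀ C : ℝ≥0∞, ∀ g : ℕ → X → ℝ, (∀ n, eLpNorm (g n) 1 m + var (g n) ≤ C) →
        ∃ (ns : ℕ → ℕ) (φ : X → ℝ), StrictMono ns ∧
          Tendsto (fun k => eLpNorm (g (ns k) - φ) 1 m) atTop (nhds 0)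
  /-- (V5) -/
  v5 : var (fun _ => (1 : ℝ)) < ∞
  /-- (V6) -/
  v6 : ∀ h : X → ℝ, 0 ≤ᵐ[m] h → eLpNorm h 1 m = 1 → ∀ ε : ℝ≥0∞, 0 < ε →
        ∃ g : X → ℝ, 0 ≤ᵐ[m] g ∧ eLpNorm g 1 m = 1 ∧ var g < ∞ ∧ eLpNorm (h - g) 1 m < ε
  /-- (V7) -/
  v7 : ∃ Kvar : ℝ≥0∞, Kvar < ∞ ∧ ∀ g h : X → ℝ,
        var (g * h) + eLpNorm (g * h) 1 m ≤
          Kvar * (var h + eLpNorm h 1 m) * (var g + eLpNorm g 1 m)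
  /-- (V8) -/
  v8 : ∀ g : X → ℝ, 0 < essInf g m →
        var (fun x => 1 / g x) ≤ var g / ENNReal.ofReal (essInf g m) ^ 2

/-- The hypotheses on the random dynamical system: `σ` is an invertible ergodic
measure-preserving map, the `𝓛_ω` are the transfer operators of the `f_ω`, and
the uniformly good conditions (H1)–(H5) hold. -/
structure UniformlyGood (P : Measure Ω) (σ : Ω → Ω) (m : Measure X)
    (var : (X → ℝ) → ℝ≥0∞) (f : Ω → X → X) (L : Ω → (X → ℝ) → X → ℝ) : Prop where
  sigma_bij : Function.Bijective σ
  sigma_pres : MeasurePreserving σ P P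
  sigma_erg : Ergodic σ P
  f_meas : ∀ ω, Measurable (f ω)
  /-- `𝓛_ω` descends to `L¹(m)` -/
  L_congr : ∀ ω (φ₁ φ₂ : X → ℝ), φ₁ =ᵐ[m] φ₂ → L ω φ₁ =ᵐ[m] L ω φ₂
  L_int : ∀ ω (φ : X → ℝ), Integrable φ m → Integrable (L ω φ) m
  /-- the duality relation defining the transfer operator `𝓛_ω` -/
  duality : ∀ ω (φ ψ : X → ℝ), Integrable φ m → Measurable ψ → (∃ c : ℝ, ∀ x, |ψ x| ≤ c) →
      ∫ x, L ω φ x * ψ x ∂m = ∫ x, φ x * ψ (f ω x) ∂m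
  /-- (H1) -/
  h1 : ∀ H : Ω → X → ℝ, Measurable (Function.uncurry H) →
      Measurable fun p : Ω × X => L p.1 (H p.1) p.2
  /-- (H2) -/
  h2 : ∃ C : ℝ, 0 < C ∧ ∀ᵐ ω ∂P, ∀ φ : X → ℝ,
      bvNorm m var (L ω φ) ≤ ENNReal.ofReal C * bvNorm m var φ
  /-- (H3) -/
  h3 : ∀ᵐ ω ∂P, ∃ B : ℝ≥0∞, B < ∞ ∧ ∀ (n : ℕ) (φ : X → ℝ), bvNorm m var φ ≤ 1 →
      bvNorm m var (φ ∘ f (σ^[n] ω)) ≤ B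
  /-- (H4) -/
  h4 : ∃ N : ℕ, 0 < N ∧ ∀ a : ℝ, 0 < a → ∃ n₀ : ℕ, ∀ n, n₀ ≤ n → ∃ c : ℝ, 0 < c ∧
      ∀ᵐ ω ∂P, ∀ g ∈ coneC m var a,
        c / 2 * ∫ x, |g x| ∂m ≤ essInf (Lit σ L ω (N * n) g) m
  /-- (H5) -/
  h5 : ∃ K lam : ℝ, 0 < K ∧ 0 < lam ∧ ∀ᵐ ω ∂P, ∀ (n : ℕ) (φ : X → ℝ), MemBV m var φ →
      (∫ x, φ x ∂m) = 0 →
      bvNorm m var (Lit σ L ω n φ) ≤ ENNReal.ofReal (K * Real.exp (-lam * n)) * bvNorm m var φ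

/-- The properties of the unique random absolutely continuous invariant density `h`. -/
structure IsACIM (P : Measure Ω) (σ : Ω → Ω) (m : Measure X)
    (var : (X → ℝ) → ℝ≥0∞) (L : Ω → (X → ℝ) → X → ℝ) (h : Ω → X → ℝ) : Prop where
  meas : Measurable (Function.uncurry h)
  nonneg : ∀ ω x, 0 ≤ h ω x
  mem_bv : ∀ᵐ ω ∂P, MemBV m var (h ω)
  mass : ∀ᵐ ω ∂P, (∫ x, h ω x ∂m) = 1
  equiv : ∀ᵐ ω ∂P, L ω (h ω) =ᵐ[m] h (σ ω)
  bdd : ∃ B : ℝ≥0∞, B < ∞ ∧ ∀ᵐ ω ∂P, bvNorm m var (h ω) ≤ B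

/-- The fibered measure `μ_ω` with `dμ_ω = h_ω dm`. -/
def muOmega (m : Measure X) (h : Ω → X → ℝ) (ω : Ω) : Measure X :=
  m.withDensity fun x => ENNReal.ofReal (h ω x)

/-- The skew product `τ(ω,x) = (σ ω, f_ω x)`. -/
def tau (σ : Ω → Ω) (f : Ω → X → X) : Ω × X → Ω × X :=
  fun p => (σ p.1, f p.1 p.2)

/-- The invariant measure `μ` of the skew product, `dμ = h d(ℙ × m)`. -/
def muProd (P : Measure Ω) (m : Measure X) (h : Ω → X → ℝ) : Measure (Ω × X) :=
  (P.prod m).withDensity fun p => ENNReal.ofReal (h p.1 p.2)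

/-- The centered observable `ψ̃_ω = ψ_ω − ∫ ψ_ω dμ_ω`. -/
def centered (m : Measure X) (h : Ω → X → ℝ) (ψ : Ω → X → ℝ) (ω : Ω) : X → ℝ :=
  fun x => ψ ω x - ∫ y, ψ ω y ∂(muOmega m h ω)

/-- The functions `G_k` of the martingale decomposition: `G₀ = 0` and
`G_{k+1} = 𝓛_{σ^k ω}(ψ̃_{σ^k ω} h_{σ^k ω} + G_k h_{σ^k ω}) / h_{σ^{k+1} ω}`. -/
def Gseq (σ : Ω → Ω) (L : Ω → (X → ℝ) → X → ℝ) (h ψt : Ω → X → ℝ) (ω : Ω) : ℕ → X → ℝ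
  | 0 => 0
  | k + 1 => fun x =>
      L (σ^[k] ω) (fun y => ψt (σ^[k] ω) y * h (σ^[k] ω) y + Gseq σ L h ψt ω k y * h (σ^[k] ω) y) x /
        h (σ^[k + 1] ω) x

/-- `M_n = ψ̃_{σ^n ω} + G_n − G_{n+1} ∘ f_{σ^n ω}`. -/
def Mseq (σ : Ω → Ω) (f : Ω → X → X) (L : Ω → (X → ℝ) → X → ℝ)
    (h ψt : Ω → X → ℝ) (ω : Ω) (n : ℕ) : X → ℝ :=
  fun x => ψt (σ^[n] ω) x + Gseq σ L h ψt ω n x - Gseq σ L h ψt ω (n + 1) (f (σ^[n] ω) x)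

/-- The σ-algebra `𝓣_ω^n = (f_ω^n)⁻¹(𝓑)`. -/
def Talg (σ : Ω → Ω) (f : Ω → X → X) (ω : Ω) (n : ℕ) : MeasurableSpace X :=
  MeasurableSpace.comap (fIter σ f ω n) inferInstance

end RandomASIP

namespace RandomASIP

/-- `G_n = (1/h_{σ^n ω}) Σ_{j=0}^{n-1} 𝓛_{σ^j ω}^{(n-j)}(ψ̃_{σ^j ω} h_{σ^j ω})`. -/
def Gsum {Ω X : Type*} [MeasurableSpace Ω] [MeasurableSpace X]
    (σ : Ω → Ω) (L : Ω → (X → ℝ) → X → ℝ) (h ψt : Ω → X → ℝ) (ω : Ω) (n : ℕ) : X → ℝ :=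
  fun x =>
    (∑ j ∈ Finset.range n,
        Lit σ L (σ^[j] ω) (n - j) (fun y => ψt (σ^[j] ω) y * h (σ^[j] ω) y) x) /
      h (σ^[n] ω) x


section Aux

variable {X : Type*} [MeasurableSpace X] {m : Measure X} {var : (X → ℝ) → ℝ≥0∞}

private lemma var_zero'
    (v1 : ∀ (t : ℝ) (h : X → ℝ), var (fun x => t * h x) = ENNReal.ofReal |t| * var h) :
    var (0 : X → ℝ) = 0 := by
  have h := v1 0 (0 : X → ℝ)
  have e : (fun x => (0 : ℝ) * (0 : X → ℝ) x) = (0 : X → ℝ) := by funext x; simp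
  rw [e] at h
  simpa using h

private lemma var_sum_le' {ι : Type*}
    (v1 : ∀ (t : ℝ) (h : X → ℝ), var (fun x => t * h x) = ENNReal.ofReal |t| * var h)
    (v2 : ∀ g h : X → ℝ, var (g + h) ≤ var g + var h)
    (s : Finset ι) (g : ι → X → ℝ) :
    var (fun x => ∑ j ∈ s, g j x) ≤ ∑ j ∈ s, var (g j) := by
  classical
  induction s using Finset.induction with
  | empty => simp [show (fun _ : X => (0 : ℝ)) = (0 : X → ℝ) from rfl, var_zero' v1]
  | @insert a s ha ih =>
      have e : (fun x => ∑ j ∈ insert a s, g j x) = g a + (fun x => ∑ j ∈ s, g j x) := by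
        funext x; simp [Finset.sum_insert ha]
      rw [e, Finset.sum_insert ha]
      exact le_trans (v2 _ _) (add_le_add_right ih _)

private lemma lit_integrable' {Ω : Type*} [MeasurableSpace Ω] {σ : Ω → Ω}
    {L : Ω → (X → ℝ) → X → ℝ}
    (hL : ∀ ω (φ : X → ℝ), Integrable φ m → Integrable (L ω φ) m)
    (ω : Ω) (n : ℕ) (φ : X → ℝ) (hφ : Integrable φ m) :
    Integrable (Lit σ L ω n φ) m := by
  induction n with
  | zero => exact hφ
  | succ n ih => exact hL _ _ ih

end Aux

/-- Lemma: uniform BV bound on the martingale coboundary terms: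
for a.e. `ω`, `sup_{n ≥ 0} ‖G_n‖_BV < ∞`. -/
theorem Gseq_bv_bounded {Ω X : Type*} [MeasurableSpace Ω] [MeasurableSpace X]
    (P : Measure Ω) [IsProbabilityMeasure P] (σ : Ω → Ω)
    (m : Measure X) [IsProbabilityMeasure m] (var : (X → ℝ) → ℝ≥0∞)
    (f : Ω → X → X) (L : Ω → (X → ℝ) → X → ℝ)
    (hvar : VariationGood m var) (hgood : UniformlyGood P σ m var f L)
    (h : Ω → X → ℝ) (hacim : IsACIM P σ m var L h)
    (c : ℝ) (hc : 0 < c) (hinf : ∀ᵐ ω ∂P, c / 2 ≤ essInf (h ω) m)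
    (ψob : Ω → X → ℝ) (hψmeas : Measurable (Function.uncurry ψob))
    (hψbd : ∃ B : ℝ≥0∞, B < ∞ ∧ ∀ ω, bvNorm m var (ψob ω) ≤ B) :
    ∀ᵐ ω ∂P, (⨆ n : ℕ, bvNorm m var (Gsum σ L h (centered m h ψob) ω n)) < ∞ := by
  classical
  obtain ⟨K, lam, hK, hlam, h5ae⟩ := hgood.h5
  obtain ⟨Kvar, hKvar, hv7⟩ := hvar.v7
  obtain ⟨Bψ, hBψlt, hBψ⟩ := hψbd
  obtain ⟨Bh, hBhlt, hBhae⟩ := hacim.bdd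
  -- constants
  set Cc : ℝ≥0∞ := Kvar * Bh * Bψ with hCc
  have hCclt : Cc < ∞ := by
    rw [hCc]
    exact ENNReal.mul_lt_top (ENNReal.mul_lt_top hKvar hBhlt) hBψlt
  set Bψt : ℝ≥0∞ := Bψ + Cc * (var (fun _ => (1 : ℝ)) + 1) with hBψt
  have hBψtlt : Bψt < ∞ := by
    rw [hBψt]
    exact ENNReal.add_lt_top.mpr ⟨hBψlt,
      ENNReal.mul_lt_top hCclt (ENNReal.add_lt_top.mpr ⟨hvar.v5, one_lt_top⟩)⟩
  set Cφ : ℝ≥0∞ := Kvar * Bh * Bψt with hCφ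
  have hCφlt : Cφ < ∞ := by
    rw [hCφ]
    exact ENNReal.mul_lt_top (ENNReal.mul_lt_top hKvar hBhlt) hBψtlt
  set ρ : ℝ≥0∞ := ENNReal.ofReal (Real.exp (-lam)) with hρ
  have hρ1 : ρ < 1 := by
    rw [hρ]
    exact ENNReal.ofReal_lt_one.mpr (Real.exp_lt_one_iff.mpr (neg_lt_zero.mpr hlam))
  set geo : ℝ≥0∞ := (1 - ρ)⁻¹ with hgeo
  have hgeolt : geo < ∞ := ENNReal.inv_lt_top.mpr (tsub_pos_of_lt hρ1)
  set D : ℝ≥0∞ := Bh / (ENNReal.ofReal (c / 2)) ^ 2 + ENNReal.ofReal (2 / c) with hD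
  have hDlt : D < ∞ := by
    rw [hD]
    refine ENNReal.add_lt_top.mpr ⟨?_, ofReal_lt_top⟩
    exact ENNReal.div_lt_top hBhlt.ne
      (pow_ne_zero 2 (ENNReal.ofReal_pos.mpr (half_pos hc)).ne')
  set M : ℝ≥0∞ := Kvar * (ENNReal.ofReal K * Cφ * geo) * D with hM
  have hMlt : M < ∞ := by
    rw [hM]
    exact ENNReal.mul_lt_top
      (ENNReal.mul_lt_top hKvar
        (ENNReal.mul_lt_top (ENNReal.mul_lt_top ofReal_lt_top hCφlt) hgeolt)) hDlt
  -- the full measure set of good fibers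
  set Q : Ω → Prop := fun ω' =>
    (∀ (n : ℕ) (φ : X → ℝ), MemBV m var φ → (∫ x, φ x ∂m) = 0 →
        bvNorm m var (Lit σ L ω' n φ) ≤
          ENNReal.ofReal (K * Real.exp (-lam * n)) * bvNorm m var φ)
      ∧ bvNorm m var (h ω') ≤ Bh ∧ c / 2 ≤ essInf (h ω') m
      ∧ (∫ x, h ω' x ∂m) = 1 ∧ MemBV m var (h ω') with hQdef
  have hQ : ∀ᵐ ω' ∂P, Q ω' := by
    filter_upwards [h5ae, hBhae, hinf, hacim.mass, hacim.mem_bv] with ω' q1 q2 q3 q4 q5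
    exact ⟨q1, q2, q3, q4, q5⟩
  have hQall : ∀ᵐ ω ∂P, ∀ j : ℕ, Q (σ^[j] ω) := by
    rw [MeasureTheory.ae_all_iff]
    intro j
    exact ((hgood.sigma_pres.iterate j).quasiMeasurePreserving).ae hQ
  -- the key per-fiber estimates on ψ̃_ω' h_ω'
  have main : ∀ ω' : Ω, Q ω' →
      MemBV m var (fun y => centered m h ψob ω' y * h ω' y) ∧
      (∫ x, centered m h ψob ω' x * h ω' x ∂m) = 0 ∧
      bvNorm m var (fun y => centered m h ψob ω' y * h ω' y) ≤ Cφ := by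
    intro ω' hQ'
    obtain ⟨-, hBh', hinf', hmass', hmembv'⟩ := hQ'
    have hmeas_h : Measurable (h ω') := hacim.meas.comp measurable_prodMk_left
    have hmeas_ψ : Measurable (ψob ω') := hψmeas.comp measurable_prodMk_left
    have hint_h : Integrable (h ω') m := hmembv'.1
    -- bound on ψ_ω' h_ω'
    have hbv_mul : var (ψob ω' * h ω') + eLpNorm (ψob ω' * h ω') 1 m ≤ Cc := by
      refine le_trans (hv7 (ψob ω') (h ω')) ?_
      rw [hCc]
      exact mul_le_mul' (mul_le_mul' le_rfl hBh') (hBψ ω')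
    have hmul_int : Integrable (fun y => ψob ω' y * h ω' y) m :=
      memLp_one_iff_integrable.mp ⟨(hmeas_ψ.mul hmeas_h).aestronglyMeasurable,
        lt_of_le_of_lt (le_trans le_add_self hbv_mul) hCclt⟩
    -- the centering constant
    set cst : ℝ := ∫ y, ψob ω' y ∂(muOmega m h ω') with hcst
    have hcst_eq : cst = ∫ y, ψob ω' y * h ω' y ∂m := by
      have e1 : muOmega m h ω' = m.withDensity (fun x => (((h ω' x).toNNReal : NNReal) : ℝ≥0∞)) :=
        rfl
      rw [hcst, e1, integral_withDensity_eq_integral_smul (hmeas_h.real_toNNReal) (ψob ω')]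
      congr 1
      funext y
      rw [NNReal.smul_def, smul_eq_mul, Real.coe_toNNReal _ (hacim.nonneg ω' y), mul_comm]
    have hcst_bd : ENNReal.ofReal |cst| ≤ Cc := by
      rw [hcst_eq]
      calc ENNReal.ofReal |∫ y, ψob ω' y * h ω' y ∂m|
          = (‖∫ y, ψob ω' y * h ω' y ∂m‖₊ : ℝ≥0∞) := (Real.enorm_eq_ofReal_abs _).symm
        _ ≤ ∫⁻ y, ‖ψob ω' y * h ω' y‖₊ ∂m := enorm_integral_le_lintegral_enorm _
        _ = eLpNorm (fun y => ψob ω' y * h ω' y) 1 m := by rw [eLpNorm_one_eq_lintegral_enorm]; rfl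
        _ ≤ Cc := le_trans le_add_self hbv_mul
    -- BV bound on the centered observable
    have hmeas_c : Measurable (centered m h ψob ω') := by
      have : centered m h ψob ω' = fun x => ψob ω' x - cst := rfl
      rw [this]
      exact hmeas_ψ.sub measurable_const
    have hbv_cent : var (centered m h ψob ω') + eLpNorm (centered m h ψob ω') 1 m ≤ Bψt := by
      have e : centered m h ψob ω' = ψob ω' + (fun x => (-cst) * (fun _ : X => (1 : ℝ)) x) := by
        funext x
        show ψob ω' x - cst = ψob ω' x + (-cst) * 1
        ring
      have hv : var (centered m h ψob ω') ≤
          var (ψob ω') + ENNReal.ofReal |cst| * var (fun _ : X => (1 : ℝ)) := by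
        rw [e]
        refine le_trans (hvar.v2 _ _) ?_
        rw [hvar.v1 (-cst) (fun _ : X => (1 : ℝ)), abs_neg]
      have hl : eLpNorm (centered m h ψob ω') 1 m ≤
          eLpNorm (ψob ω') 1 m + ENNReal.ofReal |cst| := by
        rw [e]
        refine le_trans (eLpNorm_add_le hmeas_ψ.aestronglyMeasurable
          aestronglyMeasurable_const le_rfl) ?_
        refine add_le_add_right (le_of_eq ?_) _
        have e2 : (fun x => (-cst) * (fun _ : X => (1 : ℝ)) x) = fun _ : X => -cst := by
          funext x; ring
        rw [e2, eLpNorm_const (-cst) one_ne_zero (NeZero.ne m)]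
        simp [Real.enorm_eq_ofReal_abs]
      calc var (centered m h ψob ω') + eLpNorm (centered m h ψob ω') 1 m
          ≤ (var (ψob ω') + ENNReal.ofReal |cst| * var (fun _ : X => (1 : ℝ)))
            + (eLpNorm (ψob ω') 1 m + ENNReal.ofReal |cst|) := add_le_add hv hl
        _ = (var (ψob ω') + eLpNorm (ψob ω') 1 m)
            + ENNReal.ofReal |cst| * (var (fun _ : X => (1 : ℝ)) + 1) := by
            rw [mul_add, mul_one]; ring
        _ ≤ Bψ + Cc * (var (fun _ : X => (1 : ℝ)) + 1) := by
            exact add_le_add (hBψ ω') (mul_le_mul_left hcst_bd _)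
        _ = Bψt := hBψt.symm
    -- BV bound on ψ̃_ω' h_ω'
    have hbv_φ : bvNorm m var (fun y => centered m h ψob ω' y * h ω' y) ≤ Cφ := by
      refine le_trans (hv7 (centered m h ψob ω') (h ω')) ?_
      rw [hCφ]
      exact mul_le_mul' (mul_le_mul' le_rfl hBh') hbv_cent
    have hint_φ : Integrable (fun y => centered m h ψob ω' y * h ω' y) m :=
      memLp_one_iff_integrable.mp ⟨(hmeas_c.mul hmeas_h).aestronglyMeasurable,
        lt_of_le_of_lt (le_trans le_add_self hbv_φ) hCφlt⟩
    have hint_0 : (∫ x, centered m h ψob ω' x * h ω' x ∂m) = 0 := by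
      have e : (fun x => centered m h ψob ω' x * h ω' x)
          = fun x => ψob ω' x * h ω' x - cst * h ω' x := by
        funext x
        show (ψob ω' x - cst) * h ω' x = _
        ring
      rw [e, integral_sub hmul_int (hint_h.const_mul cst), integral_const_mul, hmass',
        ← hcst_eq]
      ring
    exact ⟨⟨hint_φ, lt_of_le_of_lt (le_trans le_self_add hbv_φ) hCφlt⟩, hint_0, hbv_φ⟩
  -- the a.e. statement
  filter_upwards [hQall] with ω hω
  refine lt_of_le_of_lt (iSup_le fun n => ?_) hMlt
  have hkey : ∀ j : ℕ, MemBV m var (fun y => centered m h ψob (σ^[j] ω) y * h (σ^[j] ω) y) ∧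
      (∫ x, centered m h ψob (σ^[j] ω) x * h (σ^[j] ω) x ∂m) = 0 ∧
      bvNorm m var (fun y => centered m h ψob (σ^[j] ω) y * h (σ^[j] ω) y) ≤ Cφ :=
    fun j => main _ (hω j)
  -- per-term decay
  have hterm : ∀ j ∈ Finset.range n,
      bvNorm m var (Lit σ L (σ^[j] ω) (n - j)
        (fun y => centered m h ψob (σ^[j] ω) y * h (σ^[j] ω) y)) ≤
      ENNReal.ofReal K * ρ ^ (n - j) * Cφ := by
    intro j hj
    refine le_trans ((hω j).1 (n - j) _ (hkey j).1 (hkey j).2.1) ?_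
    have e : ENNReal.ofReal (K * Real.exp (-lam * (n - j : ℕ))) =
        ENNReal.ofReal K * ρ ^ (n - j) := by
      rw [ENNReal.ofReal_mul hK.le, hρ, ← ENNReal.ofReal_pow (Real.exp_pos _).le,
        ← Real.exp_nat_mul, mul_comm ((n - j : ℕ) : ℝ) (-lam)]
    rw [e]
    exact mul_le_mul_right (hkey j).2.2 _
  -- geometric sum bound
  have hgeosum : ∑ j ∈ Finset.range n, ρ ^ (n - j) ≤ geo := by
    have e : ∑ j ∈ Finset.range n, ρ ^ (n - j) = ∑ j ∈ Finset.range n, ρ ^ (j + 1) := by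
      rw [← Finset.sum_range_reflect (fun j => ρ ^ (j + 1)) n]
      refine Finset.sum_congr rfl fun j hj => ?_
      have hj' := Finset.mem_range.mp hj
      congr 1
      omega
    rw [e]
    calc ∑ j ∈ Finset.range n, ρ ^ (j + 1)
        ≤ ∑ j ∈ Finset.range n, ρ ^ j := by
          refine Finset.sum_le_sum fun j _ => ?_
          rw [pow_succ]
          exact mul_le_of_le_one_right' hρ1.le
      _ ≤ ∑' j : ℕ, ρ ^ j := ENNReal.sum_le_tsum _
      _ = (1 - ρ)⁻¹ := ENNReal.tsum_geometric ρ
      _ = geo := hgeo.symm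
  -- BV bound on the sum
  have hSbv : var (fun x => ∑ j ∈ Finset.range n, Lit σ L (σ^[j] ω) (n - j)
        (fun y => centered m h ψob (σ^[j] ω) y * h (σ^[j] ω) y) x)
      + eLpNorm (fun x => ∑ j ∈ Finset.range n, Lit σ L (σ^[j] ω) (n - j)
        (fun y => centered m h ψob (σ^[j] ω) y * h (σ^[j] ω) y) x) 1 m
      ≤ ENNReal.ofReal K * Cφ * geo := by
    have hv := var_sum_le' hvar.v1 hvar.v2 (Finset.range n)
      (fun j => Lit σ L (σ^[j] ω) (n - j)
        (fun y => centered m h ψob (σ^[j] ω) y * h (σ^[j] ω) y))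
    have hl : eLpNorm (fun x => ∑ j ∈ Finset.range n, Lit σ L (σ^[j] ω) (n - j)
        (fun y => centered m h ψob (σ^[j] ω) y * h (σ^[j] ω) y) x) 1 m
        ≤ ∑ j ∈ Finset.range n, eLpNorm (Lit σ L (σ^[j] ω) (n - j)
          (fun y => centered m h ψob (σ^[j] ω) y * h (σ^[j] ω) y)) 1 m := by
      have e : (fun x => ∑ j ∈ Finset.range n, Lit σ L (σ^[j] ω) (n - j)
          (fun y => centered m h ψob (σ^[j] ω) y * h (σ^[j] ω) y) x)
          = ∑ j ∈ Finset.range n, Lit σ L (σ^[j] ω) (n - j)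
            (fun y => centered m h ψob (σ^[j] ω) y * h (σ^[j] ω) y) := by
        funext x; simp
      rw [e]
      exact eLpNorm_sum_le
        (fun j _ => (lit_integrable' hgood.L_int _ _ _ (hkey j).1.1).aestronglyMeasurable)
        le_rfl
    calc var (fun x => ∑ j ∈ Finset.range n, Lit σ L (σ^[j] ω) (n - j)
          (fun y => centered m h ψob (σ^[j] ω) y * h (σ^[j] ω) y) x)
        + eLpNorm (fun x => ∑ j ∈ Finset.range n, Lit σ L (σ^[j] ω) (n - j)
          (fun y => centered m h ψob (σ^[j] ω) y * h (σ^[j] ω) y) x) 1 m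
        ≤ ∑ j ∈ Finset.range n, (var (Lit σ L (σ^[j] ω) (n - j)
            (fun y => centered m h ψob (σ^[j] ω) y * h (σ^[j] ω) y))
          + eLpNorm (Lit σ L (σ^[j] ω) (n - j)
            (fun y => centered m h ψob (σ^[j] ω) y * h (σ^[j] ω) y)) 1 m) := by
          rw [Finset.sum_add_distrib]
          exact add_le_add hv hl
      _ ≤ ∑ j ∈ Finset.range n, ENNReal.ofReal K * ρ ^ (n - j) * Cφ :=
          Finset.sum_le_sum hterm
      _ = ENNReal.ofReal K * Cφ * ∑ j ∈ Finset.range n, ρ ^ (n - j) := by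
          rw [Finset.mul_sum]
          exact Finset.sum_congr rfl fun j _ => by ring
      _ ≤ ENNReal.ofReal K * Cφ * geo := mul_le_mul_right hgeosum _
  -- BV bound on 1 / h_{σ^n ω}
  have hinv : var (fun x => 1 / h (σ^[n] ω) x)
      + eLpNorm (fun x => 1 / h (σ^[n] ω) x) 1 m ≤ D := by
    obtain ⟨-, hBh', hinf', -, -⟩ := hω n
    have hpos : 0 < essInf (h (σ^[n] ω)) m := lt_of_lt_of_le (half_pos hc) hinf'
    have hvar_inv : var (fun x => 1 / h (σ^[n] ω) x) ≤ Bh / (ENNReal.ofReal (c / 2)) ^ 2 := by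
      refine le_trans (hvar.v8 (h (σ^[n] ω)) hpos) ?_
      exact ENNReal.div_le_div (le_trans le_self_add hBh')
        (pow_le_pow_left₀ zero_le (ENNReal.ofReal_le_ofReal hinf') 2)
    have hl1 : eLpNorm (fun x => 1 / h (σ^[n] ω) x) 1 m ≤ ENNReal.ofReal (2 / c) := by
      have hbd : IsBoundedUnder (· ≥ ·) (ae m) (h (σ^[n] ω)) :=
        isBoundedUnder_of ⟨0, fun x => hacim.nonneg _ x⟩
      have hae : ∀ᵐ x ∂m, c / 2 ≤ h (σ^[n] ω) x := by
        filter_upwards [ae_essInf_le hbd] with x hx using le_trans hinf' hx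
      have habs : ∀ᵐ x ∂m, ‖1 / h (σ^[n] ω) x‖ ≤ 2 / c := by
        filter_upwards [hae] with x hx
        have h0 : 0 < h (σ^[n] ω) x := lt_of_lt_of_le (half_pos hc) hx
        rw [Real.norm_eq_abs, abs_of_nonneg (by positivity)]
        calc 1 / h (σ^[n] ω) x ≤ 1 / (c / 2) := one_div_le_one_div_of_le (half_pos hc) hx
          _ = 2 / c := one_div_div c 2
      refine le_trans (eLpNorm_le_of_ae_bound habs) ?_
      simp
    rw [hD]
    exact add_le_add hvar_inv hl1
  -- conclusion
  have heq : Gsum σ L h (centered m h ψob) ω n =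
      (fun x => 1 / h (σ^[n] ω) x) * (fun x => ∑ j ∈ Finset.range n, Lit σ L (σ^[j] ω) (n - j)
        (fun y => centered m h ψob (σ^[j] ω) y * h (σ^[j] ω) y) x) := by
    funext x
    show (∑ j ∈ Finset.range n, Lit σ L (σ^[j] ω) (n - j)
        (fun y => centered m h ψob (σ^[j] ω) y * h (σ^[j] ω) y) x) / h (σ^[n] ω) x = _
    rw [Pi.mul_apply, one_div, div_eq_mul_inv, mul_comm]
  calc bvNorm m var (Gsum σ L h (centered m h ψob) ω n)
      = bvNorm m var ((fun x => 1 / h (σ^[n] ω) x)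
        * (fun x => ∑ j ∈ Finset.range n, Lit σ L (σ^[j] ω) (n - j)
          (fun y => centered m h ψob (σ^[j] ω) y * h (σ^[j] ω) y) x)) := by rw [heq]
    _ ≤ Kvar * (var (fun x => ∑ j ∈ Finset.range n, Lit σ L (σ^[j] ω) (n - j)
          (fun y => centered m h ψob (σ^[j] ω) y * h (σ^[j] ω) y) x)
        + eLpNorm (fun x => ∑ j ∈ Finset.range n, Lit σ L (σ^[j] ω) (n - j)
          (fun y => centered m h ψob (σ^[j] ω) y * h (σ^[j] ω) y) x) 1 m)
        * (var (fun x => 1 / h (σ^[n] ω) x)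
        + eLpNorm (fun x => 1 / h (σ^[n] ω) x) 1 m) := hv7 _ _
    _ ≤ Kvar * (ENNReal.ofReal K * Cφ * geo) * D :=
        mul_le_mul' (mul_le_mul' le_rfl hSbv) hinv
    _ = M := hM.symm


end RandomASIP
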